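/- The set {1, L₂ + L₃, L₂L₃} is a ℤ-basis of the centre of the group algebra ℤS₃, where L₂ = (1 2) and L₃ = (1 3) + (2 3) are the Jucys–Murphy elements. -/

import Mathlib

/-- The element `g` of the symmetric group `S₃`, viewed in the group algebra `ℤS₃`. -/
noncomputable def e3 (σ : Equiv.Perm (Fin 3)) : MonoidAlgebra ℤ (Equiv.Perm (Fin 3)) :=
  MonoidAlgebra.of ℤ (Equiv.Perm (Fin 3)) σ

/-- The Jucys–Murphy element `L₂ = (1 2)` of `ℤS₃`. -/
noncomputable def L2 : MonoidAlgebra ℤ (Equiv.Perm (Fin 3)) := e3 (Equiv.swap 0 1)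

/-- The Jucys–Murphy element `L₃ = (1 3) + (2 3)` of `ℤS₃`. -/
noncomputable def L3 : MonoidAlgebra ℤ (Equiv.Perm (Fin 3)) := e3 (Equiv.swap 0 2) + e3 (Equiv.swap 1 2)


abbrev S3 := Equiv.Perm (Fin 3)
def t01 : S3 := Equiv.swap 0 1
def t02 : S3 := Equiv.swap 0 2
def t12 : S3 := Equiv.swap 1 2
def c3 : S3 := t01 * t02
def c3' : S3 := t01 * t12

-- apply toolkit (MonoidAlgebra-level statements)
lemma ma_add_apply (f g : MonoidAlgebra ℤ S3) (y : S3) : (f + g).coeff y = f.coeff y + g.coeff y := rfl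
lemma ma_smul_apply (a : ℤ) (f : MonoidAlgebra ℤ S3) (y : S3) : (a • f).coeff y = a * f.coeff y := by
  show (a • f.coeff) y = a * f.coeff y
  rw [Finsupp.smul_apply, smul_eq_mul]
lemma ma_zero_apply (y : S3) : (0 : MonoidAlgebra ℤ S3).coeff y = 0 := rfl
lemma ma_single_apply (a y : S3) (b : ℤ) :
    (MonoidAlgebra.single a b : MonoidAlgebra ℤ S3).coeff y = if a = y then b else 0 :=
  MonoidAlgebra.coeff_single_apply
lemma ma_congr {f g : MonoidAlgebra ℤ S3} (h : f = g) (y : S3) : f.coeff y = g.coeff y := by rw [h]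
lemma ma_ext {f g : MonoidAlgebra ℤ S3} (h : ∀ y : S3, f.coeff y = g.coeff y) : f = g := MonoidAlgebra.ext (Finsupp.ext h)

lemma e3_eq (σ : S3) : e3 σ = MonoidAlgebra.single σ 1 := rfl
lemma hone : (1 : MonoidAlgebra ℤ S3) = MonoidAlgebra.single 1 1 := MonoidAlgebra.one_def
lemma hsum : L2 + L3 = MonoidAlgebra.single t01 1 + MonoidAlgebra.single t02 1 + MonoidAlgebra.single t12 1 := by
  simp [L2, L3, e3_eq, t01, t02, t12, add_assoc]
lemma hmul : L2 * L3 = MonoidAlgebra.single c3 1 + MonoidAlgebra.single c3' 1 := by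
  simp [L2, L3, e3_eq, mul_add, MonoidAlgebra.single_mul_single, c3, c3', t01, t02, t12]

lemma six' : ∀ g : S3, g = 1 ∨ g = t01 ∨ g = t02 ∨ g = t12 ∨ g = c3 ∨ g = c3' := by decide

lemma coeffs (a b c : ℤ)
    (h : a • (MonoidAlgebra.single (1 : S3) (1 : ℤ)) +
      b • (MonoidAlgebra.single t01 1 + MonoidAlgebra.single t02 1 + MonoidAlgebra.single t12 1) +
      c • (MonoidAlgebra.single c3 1 + MonoidAlgebra.single c3' 1) = 0) :
    a = 0 ∧ b = 0 ∧ c = 0 := by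
  have h0 := ma_congr h 1
  have h1 := ma_congr h t01
  have h2 := ma_congr h c3
  simp (config := { decide := true }) only [ma_add_apply, ma_smul_apply, ma_single_apply,
    ma_zero_apply, t01, t02, t12, c3, c3', if_true, if_false, mul_one, mul_zero, add_zero,
    zero_add, reduceIte] at h0 h1 h2
  exact ⟨h0, h1, h2⟩

lemma central_single (x : MonoidAlgebra ℤ S3)
    (hx : ∀ g : S3, MonoidAlgebra.single g (1:ℤ) * x = x * MonoidAlgebra.single g 1) :
    x ∈ Subalgebra.center ℤ (MonoidAlgebra ℤ S3) := by
  rw [Subalgebra.mem_center_iff]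
  intro b
  induction b using MonoidAlgebra.induction_on with
  | of g => rw [MonoidAlgebra.of_apply]; exact hx g
  | add f g hf hg => rw [add_mul, mul_add, hf, hg]
  | smul r f hf => rw [smul_mul_assoc, mul_smul_comm, hf]

lemma G1_central : (MonoidAlgebra.single t01 (1:ℤ) + MonoidAlgebra.single t02 1 + MonoidAlgebra.single t12 1 : MonoidAlgebra ℤ S3)
    ∈ Subalgebra.center ℤ (MonoidAlgebra ℤ S3) := by
  apply central_single
  intro g
  apply ma_ext
  intro y
  simp only [mul_add, add_mul, MonoidAlgebra.single_mul_single, one_mul, ma_add_apply, ma_single_apply]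
  rcases six' g with h|h|h|h|h|h <;> subst h <;> rcases six' y with h|h|h|h|h|h <;> subst h <;>
    simp (config := { decide := true }) only [t01, t02, t12, c3, c3', reduceIte, one_mul, mul_one]

lemma G2_central : (MonoidAlgebra.single c3 (1:ℤ) + MonoidAlgebra.single c3' 1 : MonoidAlgebra ℤ S3)
    ∈ Subalgebra.center ℤ (MonoidAlgebra ℤ S3) := by
  apply central_single
  intro g
  apply ma_ext
  intro y
  simp only [mul_add, add_mul, MonoidAlgebra.single_mul_single, one_mul, ma_add_apply, ma_single_apply]
  rcases six' g with h|h|h|h|h|h <;> subst h <;> rcases six' y with h|h|h|h|h|h <;> subst h <;>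
    simp (config := { decide := true }) only [t01, t02, t12, c3, c3', reduceIte, one_mul, mul_one]

lemma central_decomp (x : MonoidAlgebra ℤ S3)
    (hx : x ∈ Subalgebra.center ℤ (MonoidAlgebra ℤ S3)) :
    x = x.coeff 1 • (MonoidAlgebra.single (1:S3) (1:ℤ)) +
      x.coeff t01 • (MonoidAlgebra.single t01 1 + MonoidAlgebra.single t02 1 + MonoidAlgebra.single t12 1) +
      x.coeff c3 • (MonoidAlgebra.single c3 1 + MonoidAlgebra.single c3' 1) := by
  have hcomm := Subalgebra.mem_center_iff.mp hx
  have hconj : ∀ σ a : S3, x.coeff (σ⁻¹ * (a * σ)) = x.coeff a := by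
    intro σ a
    have h := hcomm (MonoidAlgebra.single σ 1)
    have h2 := ma_congr h (a * σ)
    rw [MonoidAlgebra.single_mul_apply, MonoidAlgebra.mul_single_apply] at h2
    simp only [one_mul, mul_one, mul_inv_cancel_right] at h2
    exact h2
  have e1 : x.coeff (Equiv.swap 0 2) = x.coeff (Equiv.swap 0 1) := by
    have := hconj t12 t01
    rwa [show (t12⁻¹ * (t01 * t12) : S3) = Equiv.swap 0 2 from by decide,
      show (t01 : S3) = Equiv.swap 0 1 from rfl] at this
  have e2 : x.coeff (Equiv.swap 1 2) = x.coeff (Equiv.swap 0 1) := by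
    have := hconj t02 t01
    rwa [show (t02⁻¹ * (t01 * t02) : S3) = Equiv.swap 1 2 from by decide,
      show (t01 : S3) = Equiv.swap 0 1 from rfl] at this
  have e3 : x.coeff (Equiv.swap 0 1 * Equiv.swap 1 2) = x.coeff (Equiv.swap 0 1 * Equiv.swap 0 2) := by
    have := hconj t01 c3
    rwa [show (t01⁻¹ * (c3 * t01) : S3) = Equiv.swap 0 1 * Equiv.swap 1 2 from by decide,
      show (c3 : S3) = Equiv.swap 0 1 * Equiv.swap 0 2 from rfl] at this
  apply ma_ext
  intro y
  rcases six' y with h|h|h|h|h|h <;> subst h <;>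
    simp (config := { decide := true }) only [ma_add_apply, ma_smul_apply, ma_single_apply,
      t01, t02, t12, c3, c3', reduceIte, mul_one, mul_zero, add_zero, zero_add] <;>
    first | rfl | exact e1 | exact e2 | exact e3

/-- `{1, L₂ + L₃, L₂L₃}` is a ℤ-basis of the centre of `ℤS₃`: the family is linearly
independent and spans the centre as a ℤ-submodule. -/
theorem stmt13 :
    LinearIndependent ℤ ![(1 : MonoidAlgebra ℤ (Equiv.Perm (Fin 3))), L2 + L3, L2 * L3] ∧
    Subalgebra.toSubmodule (Subalgebra.center ℤ (MonoidAlgebra ℤ (Equiv.Perm (Fin 3)))) =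
      Submodule.span ℤ {(1 : MonoidAlgebra ℤ (Equiv.Perm (Fin 3))), L2 + L3, L2 * L3} := by
  constructor
  · rw [Fintype.linearIndependent_iff]
    intro g hg i
    rw [Fin.sum_univ_three] at hg
    simp only [Matrix.cons_val_zero, Matrix.cons_val_one, Matrix.head_cons, Matrix.cons_val_two,
      Matrix.tail_cons, hone, hsum, hmul] at hg
    obtain ⟨h0, h1, h2⟩ := coeffs _ _ _ hg
    fin_cases i <;> assumption
  · apply le_antisymm
    · intro x hx
      rw [Subalgebra.mem_toSubmodule] at hx
      have hd := central_decomp x hx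
      rw [← hone, ← hsum, ← hmul] at hd
      rw [hd]
      have m1 : (1 : MonoidAlgebra ℤ S3) ∈ ({1, L2 + L3, L2 * L3} : Set (MonoidAlgebra ℤ S3)) :=
        Set.mem_insert _ _
      have m2 : L2 + L3 ∈ ({1, L2 + L3, L2 * L3} : Set (MonoidAlgebra ℤ S3)) := by
        simp [Set.mem_insert_iff]
      have m3 : L2 * L3 ∈ ({1, L2 + L3, L2 * L3} : Set (MonoidAlgebra ℤ S3)) := by
        simp [Set.mem_insert_iff]
      exact Submodule.add_mem _
        (Submodule.add_mem _
          (Submodule.smul_mem _ _ (Submodule.subset_span m1))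
          (Submodule.smul_mem _ _ (Submodule.subset_span m2)))
        (Submodule.smul_mem _ _ (Submodule.subset_span m3))
    · rw [Submodule.span_le]
      intro y hy
      rw [SetLike.mem_coe, Subalgebra.mem_toSubmodule]
      rcases hy with h | h | h
      · rw [h]; exact one_mem _
      · rw [h, hsum]; exact G1_central
      · rw [Set.mem_singleton_iff] at h; rw [h, hmul]; exact G2_central
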